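/- Let $I$ and $J$ be ideals in a commutative Noetherian ring $R$ such that $J$ is generated by a sequence $g_1, \ldots, g_k$ whose images form a regular sequence on $R/I$. Then $I \cap J^r = I \cdot J^r$ for every positive integer $r$. -/

import Mathlib

open Ideal Submodule

section Aux

variable {R : Type} [CommRing R]

/-- Auxiliary: `gs` is a "regular sequence" on `R/I`, phrased ideal-theoretically. -/
def RegOnAux (I : Ideal R) (gs : List R) : Prop :=
  ∀ (i : ℕ) (h : i < gs.length) (x : R),
    gs[i] * x ∈ I ⊔ Ideal.ofList (gs.take i) → x ∈ I ⊔ Ideal.ofList (gs.take i)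

lemma mem_smul_top_iff_quot (I N : Ideal R) (x : R) :
    Submodule.Quotient.mk x ∈ (N • ⊤ : Submodule R (R ⧸ I)) ↔ x ∈ I ⊔ N := by
  have h1 : (N • ⊤ : Submodule R (R ⧸ I)) = Submodule.map I.mkQ N := by
    rw [← Submodule.range_mkQ (p := (I : Submodule R R)), ← Submodule.map_top,
      ← Submodule.map_smul'', smul_eq_mul, mul_top]
  rw [h1]
  constructor
  · intro h
    have : x ∈ Submodule.comap I.mkQ (Submodule.map I.mkQ N) := h
    rw [Submodule.comap_map_eq, Submodule.ker_mkQ] at this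
    exact sup_comm N I ▸ this
  · intro h
    have : x ∈ Submodule.comap I.mkQ (Submodule.map I.mkQ N) := by
      rw [Submodule.comap_map_eq, Submodule.ker_mkQ]; exact sup_comm I N ▸ h
    exact this

lemma regOnAux_of_isWeaklyRegular (I : Ideal R) (gs : List R)
    (h : RingTheory.Sequence.IsWeaklyRegular (R ⧸ I) gs) : RegOnAux I gs := by
  intro i hi x hx
  have hr := h.regular_mod_prev i hi
  set N := Ideal.ofList (gs.take i) with hN
  have key : ∀ y : R, (Submodule.Quotient.mk (Submodule.Quotient.mk y : R ⧸ I) :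
      (R ⧸ I) ⧸ (N • ⊤ : Submodule R (R ⧸ I))) = 0 ↔ y ∈ I ⊔ N := by
    intro y
    rw [Submodule.Quotient.mk_eq_zero]
    exact mem_smul_top_iff_quot I N y
  have h0 : gs[i] • (Submodule.Quotient.mk (Submodule.Quotient.mk x : R ⧸ I) :
      (R ⧸ I) ⧸ (N • ⊤ : Submodule R (R ⧸ I))) =
      gs[i] • (0 : (R ⧸ I) ⧸ (N • ⊤ : Submodule R (R ⧸ I))) := by
    rw [smul_zero, ← Submodule.Quotient.mk_smul, ← Submodule.Quotient.mk_smul]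
    exact (key _).mpr (by rwa [smul_eq_mul])
  exact (key x).mp (hr h0)

lemma RegOnAux.head {I : Ideal R} {a : R} {t : List R} (h : RegOnAux I (a :: t))
    {x : R} (hx : a * x ∈ I) : x ∈ I := by
  have h0 := h 0 (by simp) x
  simpa using h0 (by simpa using hx)

lemma RegOnAux.tail {I : Ideal R} {a : R} {t : List R} (h : RegOnAux I (a :: t)) :
    RegOnAux (I ⊔ Ideal.span {a}) t := by
  intro i hi x hx
  have h2 := h (i + 1) (by simpa using Nat.succ_lt_succ hi) x
  have he : (I ⊔ Ideal.span {a}) ⊔ Ideal.ofList (t.take i) =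
      I ⊔ Ideal.ofList ((a :: t).take (i + 1)) := by
    rw [List.take_succ_cons, Ideal.ofList_cons, sup_assoc]
  rw [he] at hx ⊢
  simpa using h2 (by simpa using hx)

lemma pow_succ_le_aux (a : R) (J1 : Ideal R) :
    ∀ s : ℕ, (Ideal.span {a} ⊔ J1) ^ (s + 1) ≤
      Ideal.span {a} * (Ideal.span {a} ⊔ J1) ^ s ⊔ J1 ^ (s + 1) := by
  intro s
  induction s with
  | zero => simp
  | succ s ih =>
    set A := Ideal.span {a}
    set J := A ⊔ J1
    calc J ^ (s + 2) = J ^ (s + 1) * J := pow_succ J (s + 1)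
      _ ≤ (A * J ^ s ⊔ J1 ^ (s + 1)) * J := Ideal.mul_mono_left ih
      _ = A * J ^ s * J ⊔ J1 ^ (s + 1) * J := Ideal.sup_mul _ _ _
      _ ≤ A * J ^ (s + 1) ⊔ J1 ^ (s + 2) := by
        apply sup_le
        · rw [mul_assoc, ← pow_succ]
          exact le_sup_left
        · have : J1 ^ (s + 1) * J = J1 ^ (s + 1) * A ⊔ J1 ^ (s + 2) := by
            rw [Ideal.mul_sup, ← pow_succ]
          rw [this]
          apply sup_le _ le_sup_right
          rw [mul_comm]
          exact (Ideal.mul_mono_right (Ideal.pow_right_mono le_sup_right _)).trans le_sup_left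

end Aux

section Main

variable {R : Type} [CommRing R] [IsNoetherianRing R]

lemma T_of_S (I J : Ideal R)
    (hS : ∀ r : ℕ, J ^ r ⊓ (I ⊔ J ^ (r + 1)) ≤ I * J ^ r ⊔ J ^ (r + 1)) :
    ∀ r : ℕ, 1 ≤ r → I ⊓ J ^ r = I * J ^ r := by
  intro r _
  refine le_antisymm ?_ (le_inf Ideal.mul_le_left Ideal.mul_le_right)
  have step : ∀ n : ℕ, r ≤ n → I ⊓ J ^ n ≤ I * J ^ r ⊔ (I ⊓ J ^ (n + 1)) := by
    intro n hn x hx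
    have hmem : x ∈ I * J ^ n ⊔ J ^ (n + 1) :=
      hS n ⟨hx.2, Submodule.mem_sup_left hx.1⟩
    obtain ⟨p, hp, q, hq, hpq⟩ := Submodule.mem_sup.mp hmem
    have hpI : p ∈ I * J ^ r := Ideal.mul_mono_right (Ideal.pow_le_pow_right hn) hp
    refine Submodule.mem_sup.mpr ⟨p, hpI, q, ⟨?_, hq⟩, hpq⟩
    have : q = x - p := by rw [← hpq]; ring
    rw [this]
    exact sub_mem hx.1 (Ideal.mul_le_left hp)
  have iter : ∀ m : ℕ, I ⊓ J ^ r ≤ I * J ^ r ⊔ (I ⊓ J ^ (r + m)) := by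
    intro m
    induction m with
    | zero => exact le_sup_right
    | succ m ih =>
      refine ih.trans (sup_le le_sup_left ?_)
      have := step (r + m) (Nat.le_add_right r m)
      exact this.trans (sup_le le_sup_left (by rw [← Nat.add_assoc]; exact le_sup_right))
  obtain ⟨c, hc⟩ := Ideal.exists_pow_inf_eq_pow_smul J (I : Submodule R R)
  have hAR : I ⊓ J ^ (r + c) ≤ I * J ^ r := by
    have h1 : J ^ (c + r) ⊓ I = J ^ r * (J ^ c ⊓ I) := by
      have := hc (c + r) (Nat.le_add_right c r)
      simpa [smul_eq_mul, Nat.add_sub_cancel_left] using this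
    calc I ⊓ J ^ (r + c) = J ^ (c + r) ⊓ I := by rw [inf_comm, Nat.add_comm r c]
      _ = J ^ r * (J ^ c ⊓ I) := h1
      _ ≤ J ^ r * I := Ideal.mul_mono_right inf_le_right
      _ = I * J ^ r := mul_comm _ _
  exact (iter c).trans (sup_le le_rfl hAR)

lemma keyS : ∀ (gs : List R) (I : Ideal R), RegOnAux I gs →
    ∀ r : ℕ, (Ideal.ofList gs) ^ r ⊓ (I ⊔ (Ideal.ofList gs) ^ (r + 1)) ≤
      I * (Ideal.ofList gs) ^ r ⊔ (Ideal.ofList gs) ^ (r + 1) := by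
  intro gs
  induction gs with
  | nil =>
    intro I _ r
    cases r with
    | zero => simpa using inf_le_right
    | succ r => simp [pow_succ]
  | cons a t ih =>
    intro I hreg r
    have htail : RegOnAux (I ⊔ Ideal.span {a}) t := hreg.tail
    have hS1 := ih (I ⊔ Ideal.span {a}) htail
    have hT1 := T_of_S (I ⊔ Ideal.span {a}) (Ideal.ofList t) hS1
    rw [Ideal.ofList_cons]
    set A := Ideal.span {a} with hA
    set J1 := Ideal.ofList t with hJ1
    set J : Ideal R := A ⊔ J1 with hJdef
    induction r with
    | zero => simpa using inf_le_right
    | succ r ihr =>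
      intro x hx
      obtain ⟨hx1, hx2⟩ := hx
      set G : Ideal R := I * J ^ (r + 1) ⊔ J ^ (r + 2) with hG
      -- decompose x = a*u + h
      obtain ⟨p, hp, h, hh, hxph⟩ := Submodule.mem_sup.mp (pow_succ_le_aux a J1 r hx1)
      obtain ⟨u, hu, hau⟩ := Ideal.mem_span_singleton_mul.mp hp
      -- h ∈ (I ⊔ A) ⊔ J1 ^ (r+2), hence h ∈ G
      have hIJ : I ⊔ J ^ (r + 2) ≤ (I ⊔ A) ⊔ J1 ^ (r + 2) := by
        refine sup_le (le_sup_left.trans' le_sup_left) ?_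
        refine (pow_succ_le_aux a J1 (r + 1)).trans (sup_le ?_ le_sup_right)
        exact Ideal.mul_le_left.trans (le_sup_right.trans le_sup_left)
      have hhmem : h ∈ (I ⊔ A) ⊔ J1 ^ (r + 2) := by
        have : h = x - a * u := by linear_combination hxph + hau
        rw [this]
        refine sub_mem (hIJ hx2) ?_
        exact le_sup_left (α := Ideal R) <| le_sup_right (α := Ideal R) <|
          Ideal.mem_span_singleton.mpr ⟨u, rfl⟩
      have hhG : h ∈ G := by
        have h2 := hS1 (r + 1) ⟨hh, hhmem⟩
        have hle : (I ⊔ A) * J1 ^ (r + 1) ⊔ J1 ^ (r + 2) ≤ G := by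
          refine sup_le ?_ (le_sup_right.trans' (Ideal.pow_right_mono le_sup_right _))
          rw [Ideal.sup_mul]
          refine sup_le ?_ ?_
          · exact le_sup_left.trans' (Ideal.mul_mono_right (Ideal.pow_right_mono le_sup_right _))
          · refine le_sup_right.trans' ?_
            rw [pow_succ' J (r + 1)]
            exact Ideal.mul_mono (le_sup_left) (Ideal.pow_right_mono le_sup_right _)
        exact hle h2
      -- a*u ∈ I ⊔ J^(r+2)
      have hauI : a * u ∈ I ⊔ J ^ (r + 2) := by
        have : a * u = x - h := by linear_combination hxph + hau
        rw [this]
        refine sub_mem hx2 ?_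
        exact (sup_le (Ideal.mul_le_left.trans le_sup_left) le_sup_right :
          G ≤ I ⊔ J ^ (r + 2)) hhG
      -- decompose a*u = i + a*v + h'
      have hdec : a * u ∈ I ⊔ (A * J ^ (r + 1) ⊔ J1 ^ (r + 2)) :=
        (sup_le le_sup_left ((pow_succ_le_aux a J1 (r + 1)).trans le_sup_right)) hauI
      obtain ⟨i, hi, y, hy, hiy⟩ := Submodule.mem_sup.mp hdec
      obtain ⟨p', hp', h', hh', hph'⟩ := Submodule.mem_sup.mp hy
      obtain ⟨v, hv, hav⟩ := Ideal.mem_span_singleton_mul.mp hp'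
      -- h' ∈ (I ⊔ A) ⊓ J1^(r+2) = (I ⊔ A) * J1^(r+2)
      have hh'IA : h' ∈ (I ⊔ A) := by
        have heq : a * u = i + (a * v + h') := by linear_combination -(hiy + hph' + hav)
        have : h' = a * (u - v) + (- i) := by linear_combination -heq
        rw [this]
        refine add_mem ?_ (neg_mem (le_sup_left (α := Ideal R) hi))
        exact le_sup_right (α := Ideal R) (Ideal.mem_span_singleton.mpr ⟨u - v, rfl⟩)
      have hh'mul : h' ∈ (I ⊔ A) * J1 ^ (r + 2) := by
        rw [← hT1 (r + 2) (Nat.le_add_left 1 (r + 1))]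
        exact ⟨hh'IA, hh'⟩
      rw [Ideal.sup_mul] at hh'mul
      obtain ⟨i', hi', q, hq, hiq⟩ := Submodule.mem_sup.mp hh'mul
      obtain ⟨w, hw, haw⟩ := Ideal.mem_span_singleton_mul.mp hq
      -- a * (u - v - w) ∈ I
      have hkey : a * (u - v - w) ∈ I := by
        have h1 : a * u = i + (a * v + h') := by linear_combination -(hiy + hph' + hav)
        have h2 : h' = i' + a * w := by linear_combination -(hiq + haw)
        have : a * (u - v - w) = i + i' := by linear_combination h1 + h2
        rw [this]
        exact add_mem hi (Ideal.mul_le_left hi')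
      have huvw : u - v - w ∈ I := hreg.head hkey
      -- u ∈ J^r ⊓ (I ⊔ J^(r+1))
      have huI : u ∈ I ⊔ J ^ (r + 1) := by
        have : u = (u - v - w) + v + w := by ring
        rw [this]
        refine add_mem (add_mem (le_sup_left (α := Ideal R) huvw)
          (le_sup_right (α := Ideal R) hv)) ?_
        refine le_sup_right (α := Ideal R) ?_
        exact Ideal.pow_le_pow_right (Nat.le_succ (r+1)) (Ideal.pow_right_mono le_sup_right _ hw)
      have hu2 := ihr ⟨hu, huI⟩
      obtain ⟨p2, hp2, q2, hq2, hpq2⟩ := Submodule.mem_sup.mp hu2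
      -- a*u ∈ G
      have hauG : a * u ∈ G := by
        have : a * u = a * p2 + a * q2 := by rw [← hpq2]; ring
        rw [this]
        refine add_mem ?_ ?_
        · refine le_sup_left (α := Ideal R) ?_
          have : a * p2 ∈ A * (I * J ^ r) := Ideal.mem_span_singleton_mul.mpr ⟨p2, hp2, rfl⟩
          have hle : A * (I * J ^ r) ≤ I * J ^ (r + 1) := by
            rw [mul_left_comm]
            refine Ideal.mul_mono_right ?_
            rw [pow_succ' J r]
            exact Ideal.mul_mono_left le_sup_left
          exact hle this
        · refine le_sup_right (α := Ideal R) ?_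
          have : a * q2 ∈ A * J ^ (r + 1) := Ideal.mem_span_singleton_mul.mpr ⟨q2, hq2, rfl⟩
          have hle : A * J ^ (r + 1) ≤ J ^ (r + 2) := by
            rw [pow_succ' J (r + 1)]
            exact Ideal.mul_mono_left le_sup_left
          exact hle this
      have : x ∈ G := by
        rw [← hxph, ← hau]
        exact add_mem hauG hhG
      exact this

end Main


/-- If `J` is generated by a sequence `g₁, …, g_k` whose images form a regular
sequence on `R/I` (with `R` Noetherian), then `I ∩ Jʳ = I·Jʳ` for every `r ≥ 1`. -/
theorem inf_pow_eq_mul_pow_of_regular_sequence {R : Type} [CommRing R] [IsNoetherianRing R]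
    (I J : Ideal R) {k : ℕ} (g : Fin k → R) (hJ : J = Ideal.span (Set.range g))
    (hreg : RingTheory.Sequence.IsRegular (R ⧸ I) (List.ofFn g)) :
    ∀ r : ℕ, 1 ≤ r → I ⊓ J ^ r = I * J ^ r := by
  have hJ' : J = Ideal.ofList (List.ofFn g) := by
    rw [hJ]; congr 1; ext y; simp [List.mem_ofFn]
  have hra := regOnAux_of_isWeaklyRegular I (List.ofFn g) hreg.toIsWeaklyRegular
  exact hJ' ▸ T_of_S I (Ideal.ofList (List.ofFn g)) (keyS (List.ofFn g) I hra)
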